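/- For every nonempty open subset U of H(ω*), there exists a family of 𝔠 many pairwise disjoint nonempty open subsets of H(ω*) each contained in U; hence the cellularity and density of every nonempty open subspace of H(ω*) equal 𝔠. -/

import Mathlib

open Set Topology TopologicalSpace

/-- The compact-open topology on the group of self-homeomorphisms of a space:
the topology induced from the compact-open topology on `C(X, X)`. -/
instance homeomorphCompactOpen (X : Type*) [TopologicalSpace X] :
    TopologicalSpace (X ≃ₜ X) :=
  TopologicalSpace.induced (fun h : X ≃ₜ X => (h : C(X, X))) ContinuousMap.compactOpen

/-- The group of self-homeomorphisms of a space, under composition. -/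
instance homeomorphGroup (X : Type*) [TopologicalSpace X] : Group (X ≃ₜ X) where
  mul f g := g.trans f
  one := Homeomorph.refl X
  inv := Homeomorph.symm
  mul_assoc _ _ _ := Homeomorph.ext fun _ => rfl
  one_mul _ := Homeomorph.ext fun _ => rfl
  mul_one _ := Homeomorph.ext fun _ => rfl
  inv_mul_cancel f := Homeomorph.ext fun x => f.symm_apply_apply x

/-- The weight of a topological space: the least cardinality of a base of its topology. -/
noncomputable def TopologicalSpace.weight (X : Type u) [TopologicalSpace X] : Cardinal.{u} :=
  ⨅ B : {B : Set (Set X) // TopologicalSpace.IsTopologicalBasis B}, Cardinal.mk B.1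

/-- A set is an Fσ-set if it is a countable union of closed sets. -/
def IsFsigma {X : Type*} [TopologicalSpace X] (s : Set X) : Prop :=
  ∃ F : ℕ → Set X, (∀ n, IsClosed (F n)) ∧ s = ⋃ n, F n

/-- An F-space (for normal spaces): disjoint open Fσ-sets have disjoint closures. -/
def IsFSpace (X : Type*) [TopologicalSpace X] : Prop :=
  ∀ U V : Set X, IsOpen U → IsOpen V → IsFsigma U → IsFsigma V → Disjoint U V →
    Disjoint (closure U) (closure V)

/-- A Parovičenko space: a compact zero-dimensional F-space of weight `𝔠` in which
every nonempty Gδ-set has infinite interior. -/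
structure IsParovicenko (X : Type u) [TopologicalSpace X] : Prop where
  compact : CompactSpace X
  t2 : T2Space X
  zeroDim : TopologicalSpace.IsTopologicalBasis {s : Set X | IsClopen s}
  fSpace : IsFSpace X
  weight_eq : TopologicalSpace.weight X = Cardinal.continuum
  gdelta_int : ∀ s : Set X, IsGδ s → s.Nonempty → (interior s).Infinite

/-- The Gδ-modification of a topology: the topology generated by the Gδ-sets. -/
def gdeltaMod {X : Type*} (t : TopologicalSpace X) : TopologicalSpace X :=
  TopologicalSpace.generateFrom {s : Set X | @IsGδ X t s}

/-- The Čech–Stone remainder `βα \ α` of a space `α`. -/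
abbrev CechStoneRemainder (α : Type u) [TopologicalSpace α] : Type u :=
  {p : StoneCech α // p ∉ Set.range (stoneCechUnit : α → StoneCech α)}

/-- `ω* = βω \ ω`, the Čech–Stone remainder of the countable discrete space `ω`. -/
abbrev OmegaStar : Type := CechStoneRemainder ℕ

open scoped Classical

namespace OSP

/-- The extension of the (decidable) indicator of `A` to `βℕ`. -/
noncomputable def chi (A : Set ℕ) : StoneCech ℕ → Bool :=
  stoneCechExtend (continuous_of_discreteTopology (f := fun n => decide (n ∈ A)))

lemma continuous_chi (A : Set ℕ) : Continuous (chi A) := continuous_stoneCechExtend _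

lemma chi_unit (A : Set ℕ) (n : ℕ) : chi A (stoneCechUnit n) = decide (n ∈ A) :=
  congrFun (stoneCechExtend_extends _) n

/-- The basic clopen set of `βℕ` corresponding to `A ⊆ ℕ`. -/
noncomputable def bx (A : Set ℕ) : Set (StoneCech ℕ) := chi A ⁻¹' {true}

lemma isClopen_bx (A : Set ℕ) : IsClopen (bx A) :=
  (isClopen_discrete _).preimage (continuous_chi A)

lemma unit_mem_bx {A : Set ℕ} {n : ℕ} : stoneCechUnit n ∈ bx A ↔ n ∈ A := by
  simp [bx, chi_unit]

lemma bx_eq_closure (A : Set ℕ) : bx A = closure (stoneCechUnit '' A) := by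
  apply Subset.antisymm
  · intro x hx
    have h1 : bx A ⊆ closure (bx A ∩ range stoneCechUnit) :=
      denseRange_stoneCechUnit.open_subset_closure_inter (isClopen_bx A).isOpen
    refine closure_mono ?_ (h1 hx)
    rintro y ⟨hy, n, rfl⟩
    exact ⟨n, unit_mem_bx.mp hy, rfl⟩
  · refine closure_minimal ?_ (isClopen_bx A).isClosed
    rintro y ⟨n, hn, rfl⟩
    exact unit_mem_bx.mpr hn

lemma bx_compl (A : Set ℕ) : bx Aᶜ = (bx A)ᶜ := by
  have h : chi Aᶜ = fun x => !(chi A x) := by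
    apply stoneCech_hom_ext (continuous_chi _)
    · exact (continuous_of_discreteTopology
        (f := fun b : Bool => !b)).comp (continuous_chi A)
    · funext n
      simp [chi_unit]
  ext x
  simp [bx, h]

lemma bx_inter (A B : Set ℕ) : bx (A ∩ B) = bx A ∩ bx B := by
  have h : chi (A ∩ B) = fun x => (chi A x && chi B x) := by
    apply stoneCech_hom_ext (continuous_chi _)
    · exact (continuous_of_discreteTopology
        (f := fun p : Bool × Bool => p.1 && p.2)).comp
        ((continuous_chi A).prodMk (continuous_chi B))
    · funext n
      simp [chi_unit]
  ext x
  simp [bx, h, Bool.and_eq_true]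

lemma bx_union (A B : Set ℕ) : bx (A ∪ B) = bx A ∪ bx B := by
  simp [bx_eq_closure, image_union, closure_union]

lemma bx_mono {A B : Set ℕ} (h : A ⊆ B) : bx A ⊆ bx B := by
  rw [bx_eq_closure, bx_eq_closure]
  exact closure_mono (image_mono h)

lemma bx_univ : bx (univ : Set ℕ) = univ := by
  ext x; simp only [bx, mem_preimage, mem_singleton_iff, mem_univ, iff_true]
  have : chi (univ : Set ℕ) = fun _ => true := by
    apply stoneCech_hom_ext (continuous_chi _) continuous_const
    funext n; simp [chi_unit]
  simp [this]

lemma bx_finite {A : Set ℕ} (hA : A.Finite) : bx A = stoneCechUnit '' A := by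
  rw [bx_eq_closure]
  exact (hA.image _).isClosed.closure_eq

lemma unit_injective : Function.Injective (stoneCechUnit : ℕ → StoneCech ℕ) := by
  intro n m h
  have h1 : stoneCechUnit n ∈ bx ({m} : Set ℕ) := by rw [h]; exact unit_mem_bx.mpr rfl
  exact (unit_mem_bx (A := ({m} : Set ℕ))).mp h1

lemma bx_inter_range (A : Set ℕ) :
    bx A ∩ range stoneCechUnit = stoneCechUnit '' A := by
  ext x
  constructor
  · rintro ⟨hx, n, rfl⟩; exact ⟨n, unit_mem_bx.mp hx, rfl⟩
  · rintro ⟨n, hn, rfl⟩; exact ⟨unit_mem_bx.mpr hn, n, rfl⟩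

lemma isOpen_range_unit : IsOpen (range (stoneCechUnit : ℕ → StoneCech ℕ)) := by
  have h : range (stoneCechUnit : ℕ → StoneCech ℕ) = ⋃ n, bx ({n} : Set ℕ) := by
    ext x
    simp only [mem_range, mem_iUnion]
    constructor
    · rintro ⟨n, rfl⟩; exact ⟨n, unit_mem_bx.mpr rfl⟩
    · rintro ⟨n, hn⟩
      have := bx_finite (finite_singleton n) ▸ hn
      rcases this with ⟨m, hm, rfl⟩
      exact ⟨m, rfl⟩
  rw [h]
  exact isOpen_iUnion fun n => (isClopen_bx _).isOpen

instance : CompactSpace OmegaStar :=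
  isCompact_iff_compactSpace.mp isOpen_range_unit.isClosed_compl.isCompact


/-- The trace of a basic clopen set on `ω*`. -/
noncomputable def tr (A : Set ℕ) : Set OmegaStar := Subtype.val ⁻¹' bx A

lemma isClopen_tr (A : Set ℕ) : IsClopen (tr A) :=
  (isClopen_bx A).preimage continuous_subtype_val

lemma isCompact_tr (A : Set ℕ) : IsCompact (tr A) :=
  (isClopen_tr A).isClosed.isCompact

lemma tr_inter (A B : Set ℕ) : tr (A ∩ B) = tr A ∩ tr B := by
  simp [tr, bx_inter, preimage_inter]

lemma tr_mono {A B : Set ℕ} (h : A ⊆ B) : tr A ⊆ tr B :=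
  preimage_mono (bx_mono h)

lemma bx_biInter {ι : Type*} (t : Finset ι) (A : ι → Set ℕ) :
    bx (⋂ i ∈ t, A i) = ⋂ i ∈ t, bx (A i) := by
  classical
  induction t using Finset.induction with
  | empty => simp [bx_univ]
  | insert _ _ hnotmem ih => simp [bx_inter, ih]

lemma tr_union (A B : Set ℕ) : tr (A ∪ B) = tr A ∪ tr B := by
  simp [tr, bx_union, preimage_union]

lemma tr_biUnion {ι : Type*} (t : Finset ι) (A : ι → Set ℕ) :
    tr (⋃ i ∈ t, A i) = ⋃ i ∈ t, tr (A i) := by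
  classical
  induction t using Finset.induction with
  | empty => simp [tr, bx_eq_closure]
  | insert _ _ hnotmem ih =>
      simp only [Finset.mem_insert, iUnion_iUnion_eq_or_left]
      rw [← ih]
      simp [tr_union]

lemma tr_eq_empty_of_finite {A : Set ℕ} (hA : A.Finite) : tr A = ∅ := by
  ext x
  simp only [tr, mem_preimage, mem_empty_iff_false, iff_false]
  intro hx
  rw [bx_finite hA] at hx
  rcases hx with ⟨n, _, hn⟩
  exact x.2 ⟨n, hn⟩

lemma tr_nonempty_of_infinite {A : Set ℕ} (hA : A.Infinite) : (tr A).Nonempty := by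
  by_contra hemp
  rw [not_nonempty_iff_eq_empty] at hemp
  have hsub : bx A ⊆ range (stoneCechUnit : ℕ → StoneCech ℕ) := by
    intro x hx
    by_contra hxr
    have : (⟨x, hxr⟩ : OmegaStar) ∈ tr A := hx
    simp [hemp] at this
  have heq : bx A = stoneCechUnit '' A := by
    rw [← bx_inter_range]
    exact Subset.antisymm (fun x hx => ⟨hx, hsub hx⟩) inter_subset_left
  have hcomp : IsCompact (stoneCechUnit '' A) := heq ▸ (isClopen_bx A).isClosed.isCompact
  have hcover : stoneCechUnit '' A ⊆ ⋃ n : A, bx ({(n : ℕ)} : Set ℕ) := by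
    rintro x ⟨n, hn, rfl⟩
    exact mem_iUnion.mpr ⟨⟨n, hn⟩, unit_mem_bx.mpr rfl⟩
  obtain ⟨t, ht⟩ := hcomp.elim_finite_subcover (fun n : A => bx ({(n : ℕ)} : Set ℕ))
    (fun n => (isClopen_bx _).isOpen) hcover
  apply hA
  have : A ⊆ (t.image (fun n : A => (n : ℕ)) : Finset ℕ) := by
    intro n hn
    have := ht ⟨n, hn, rfl⟩
    rcases mem_iUnion₂.mp this with ⟨m, hm, hx⟩
    have hnm : n = (m : ℕ) := (unit_mem_bx (A := ({(m : ℕ)} : Set ℕ))).mp hx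
    exact Finset.mem_image.mpr ⟨m, hm, hnm.symm⟩
  exact Set.Finite.subset (t.image _).finite_toSet this

lemma infinite_of_tr_nonempty {A : Set ℕ} (h : (tr A).Nonempty) : A.Infinite := by
  by_contra hfin
  rw [Set.not_infinite] at hfin
  rw [tr_eq_empty_of_finite hfin] at h
  exact h.ne_empty rfl

/-- Separation of points of `βℕ` by basic clopen sets. -/
lemma exists_bx_sep {x y : StoneCech ℕ} (hxy : x ≠ y) :
    ∃ A : Set ℕ, x ∈ bx A ∧ y ∉ bx A := by
  obtain ⟨f, hf0, hf1, -⟩ := exists_continuous_zero_one_of_isClosed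
    (isClosed_singleton (x := x)) (isClosed_singleton (x := y))
    (disjoint_singleton.mpr hxy)
  refine ⟨{n | f (stoneCechUnit n) < 1/2}, ?_, ?_⟩
  · rw [bx_eq_closure]
    have hx2 : x ∈ closure ((f ⁻¹' Iio (1/2)) ∩ range stoneCechUnit) := by
      apply denseRange_stoneCechUnit.open_subset_closure_inter
        (isOpen_Iio.preimage f.continuous)
      simp only [mem_preimage, hf0 rfl]
      norm_num
    refine closure_mono ?_ hx2
    rintro z ⟨hz, n, rfl⟩
    exact ⟨n, hz, rfl⟩
  · rw [bx_eq_closure]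
    intro hy
    have hcl : closure (stoneCechUnit '' {n | f (stoneCechUnit n) < 1/2})
        ⊆ f ⁻¹' Iic ((1/2 : ℝ)) := by
      apply closure_minimal
      · rintro z ⟨n, hn, rfl⟩
        simp only [mem_preimage, mem_Iic]
        exact le_of_lt hn
      · exact isClosed_Iic.preimage f.continuous
    have := hcl hy
    simp only [mem_preimage, hf1 rfl, mem_Iic] at this
    norm_num at this

/-- Basic clopen sets form a neighborhood basis in `βℕ`. -/
lemma exists_bx_subset {x : StoneCech ℕ} {W : Set (StoneCech ℕ)} (hW : IsOpen W)
    (hx : x ∈ W) : ∃ A : Set ℕ, x ∈ bx A ∧ bx A ⊆ W := by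
  have hK : IsCompact Wᶜ := hW.isClosed_compl.isCompact
  have hsep : ∀ y : ↥(Wᶜ), ∃ A : Set ℕ, x ∈ bx A ∧ (y : StoneCech ℕ) ∉ bx A := by
    intro y
    exact exists_bx_sep (fun h => y.2 (h ▸ hx))
  choose A hxA hyA using hsep
  have hcover : Wᶜ ⊆ ⋃ y : ↥(Wᶜ), (bx (A y))ᶜ := by
    intro y hy
    exact mem_iUnion.mpr ⟨⟨y, hy⟩, hyA ⟨y, hy⟩⟩
  obtain ⟨t, ht⟩ := hK.elim_finite_subcover (fun y : ↥(Wᶜ) => (bx (A y))ᶜ)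
    (fun y => (isClopen_bx _).isClosed.isOpen_compl) hcover
  refine ⟨⋂ y ∈ t, A y, ?_, ?_⟩
  · rw [bx_biInter]
    exact mem_iInter₂.mpr fun y _ => hxA y
  · intro z hz
    by_contra hzW
    rcases mem_iUnion₂.mp (ht hzW) with ⟨y, hy, hzy⟩
    exact hzy (bx_mono (biInter_subset_of_mem hy) hz)

/-- Basic clopen traces form a neighborhood basis in `ω*`. -/
lemma exists_tr_subset {q : OmegaStar} {W : Set OmegaStar} (hW : IsOpen W)
    (hq : q ∈ W) : ∃ A : Set ℕ, q ∈ tr A ∧ tr A ⊆ W ∧ A.Infinite := by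
  obtain ⟨W', hW', rfl⟩ := isOpen_induced_iff.mp hW
  obtain ⟨A, hqA, hAW⟩ := exists_bx_subset hW' hq
  exact ⟨A, hqA, fun z hz => hAW hz, infinite_of_tr_nonempty ⟨q, hqA⟩⟩

/-- Compact subsets of open sets can be interpolated by clopen traces. -/
lemma exists_tr_of_compact_subset {K W : Set OmegaStar} (hK : IsCompact K)
    (hW : IsOpen W) (hKW : K ⊆ W) : ∃ A : Set ℕ, K ⊆ tr A ∧ tr A ⊆ W := by
  have hsel : ∀ x : K, ∃ A : Set ℕ, (x : OmegaStar) ∈ tr A ∧ tr A ⊆ W ∧ A.Infinite :=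
    fun x => exists_tr_subset hW (hKW x.2)
  choose A hxA hAW _ using hsel
  have hcover : K ⊆ ⋃ x : K, tr (A x) := fun x hx => mem_iUnion.mpr ⟨⟨x, hx⟩, hxA _⟩
  obtain ⟨t, ht⟩ := hK.elim_finite_subcover (fun x : K => tr (A x))
    (fun x => (isClopen_tr _).isOpen) hcover
  refine ⟨⋃ x ∈ t, A x, ?_, ?_⟩
  · rw [tr_biUnion]
    exact ht
  · intro z hz
    rw [tr_biUnion] at hz
    rcases mem_iUnion₂.mp hz with ⟨x, hx, hzx⟩
    exact hAW x hzx

/-! ### Maps of `βℕ` induced by maps of `ℕ` -/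

noncomputable def bmap (f : ℕ → ℕ) : StoneCech ℕ → StoneCech ℕ :=
  stoneCechExtend (continuous_of_discreteTopology (f := fun n => stoneCechUnit (f n)))

lemma continuous_bmap (f : ℕ → ℕ) : Continuous (bmap f) := continuous_stoneCechExtend _

lemma bmap_unit (f : ℕ → ℕ) (n : ℕ) : bmap f (stoneCechUnit n) = stoneCechUnit (f n) :=
  congrFun (stoneCechExtend_extends _) n

lemma bmap_comp (f g : ℕ → ℕ) : bmap f ∘ bmap g = bmap (f ∘ g) := by
  apply stoneCech_hom_ext ((continuous_bmap f).comp (continuous_bmap g)) (continuous_bmap _)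
  funext n
  simp [Function.comp, bmap_unit]

lemma bmap_id : bmap id = id := by
  apply stoneCech_hom_ext (continuous_bmap _) continuous_id
  funext n
  simp [bmap_unit]

lemma bmap_mem_bx {f : ℕ → ℕ} {A : Set ℕ} {x : StoneCech ℕ} (hx : x ∈ bx A) :
    bmap f x ∈ bx (f '' A) := by
  rw [bx_eq_closure] at hx ⊢
  have h1 : bmap f '' closure (stoneCechUnit '' A)
      ⊆ closure (bmap f '' (stoneCechUnit '' A)) :=
    image_closure_subset_closure_image (continuous_bmap f)
  have h2 : bmap f '' (stoneCechUnit '' A) = stoneCechUnit '' (f '' A) := by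
    rw [image_image, image_image]
    ext z
    simp [bmap_unit]
  exact h2 ▸ (h1 ⟨x, hx, rfl⟩)

lemma bmap_fix {f : ℕ → ℕ} {S : Set ℕ} (hf : ∀ n ∈ S, f n = n) {x : StoneCech ℕ}
    (hx : x ∈ bx S) : bmap f x = x := by
  have heq : EqOn (bmap f) id (stoneCechUnit '' S) := by
    rintro z ⟨n, hn, rfl⟩
    simp [bmap_unit, hf n hn]
  have := heq.closure (continuous_bmap f) continuous_id
  rw [bx_eq_closure] at hx
  exact this hx

lemma bmap_symm_bmap (τ : ℕ ≃ ℕ) (x : StoneCech ℕ) : bmap ⇑τ.symm (bmap ⇑τ x) = x := by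
  have h1 : bmap ⇑τ.symm ∘ bmap ⇑τ = bmap (⇑τ.symm ∘ ⇑τ) := bmap_comp _ _
  have h2 : (⇑τ.symm ∘ ⇑τ : ℕ → ℕ) = id := by funext n; simp
  calc bmap ⇑τ.symm (bmap ⇑τ x) = (bmap ⇑τ.symm ∘ bmap ⇑τ) x := rfl
    _ = bmap id x := by rw [h1, h2]
    _ = x := by rw [bmap_id]; rfl

lemma bmap_perm_notin_range (τ : ℕ ≃ ℕ) (x : OmegaStar) :
    bmap ⇑τ (x : OmegaStar).1 ∉ range (stoneCechUnit : ℕ → StoneCech ℕ) := by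
  rintro ⟨n, hn⟩
  apply x.2
  refine ⟨τ.symm n, ?_⟩
  have h := bmap_symm_bmap τ x.1
  rw [← hn, bmap_unit] at h
  exact h

/-- The self-homeomorphism of `ω*` induced by a permutation of `ℕ`. -/
noncomputable def permEquiv (σ : ℕ ≃ ℕ) : OmegaStar ≃ OmegaStar where
  toFun := fun x => ⟨bmap ⇑σ x.1, bmap_perm_notin_range σ x⟩
  invFun := fun x => ⟨bmap ⇑σ.symm x.1, by simpa using bmap_perm_notin_range σ.symm x⟩
  left_inv := fun x => Subtype.ext (bmap_symm_bmap σ x.1)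
  right_inv := fun x => Subtype.ext (by simpa using bmap_symm_bmap σ.symm x.1)

noncomputable def permOmega (σ : ℕ ≃ ℕ) : OmegaStar ≃ₜ OmegaStar :=
  Homeomorph.mk (permEquiv σ)
    (((continuous_bmap ⇑σ).comp continuous_subtype_val).subtype_mk _)
    (((continuous_bmap ⇑σ.symm).comp continuous_subtype_val).subtype_mk _)

lemma permOmega_apply (σ : ℕ ≃ ℕ) (x : OmegaStar) :
    ((permOmega σ x : OmegaStar) : StoneCech ℕ) = bmap ⇑σ x.1 := rfl

lemma permOmega_mapsTo {σ : ℕ ≃ ℕ} {C : Set ℕ} :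
    MapsTo (permOmega σ) (tr C) (tr (σ '' C)) := fun x hx => bmap_mem_bx hx

lemma permOmega_fix {σ : ℕ ≃ ℕ} {B : Set ℕ} (hσ : ∀ n ∉ B, σ n = n) {x : OmegaStar}
    (hx : x ∉ tr B) : permOmega σ x = x := by
  apply Subtype.ext
  show bmap σ x.1 = x.1
  apply bmap_fix (S := Bᶜ) (fun n hn => hσ n hn)
  rw [bx_compl]
  exact hx

/-! ### Permutations moving one set onto another inside a support -/

lemma equiv_of_infinite {S T : Set ℕ} (hS : S.Infinite) (hT : T.Infinite) :
    Nonempty (↥S ≃ ↥T) := by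
  have := hS.to_subtype
  have := hT.to_subtype
  obtain ⟨dS⟩ := nonempty_denumerable ↥S
  obtain ⟨dT⟩ := nonempty_denumerable ↥T
  exact ⟨(Denumerable.eqv ↥S).trans (Denumerable.eqv ↥T).symm⟩

lemma exists_perm {B C T : Set ℕ} (hCB : C ⊆ B) (hTB : T ⊆ B) (hC : C.Infinite)
    (hT : T.Infinite) (hBC : (B \ C).Infinite) (hBT : (B \ T).Infinite) :
    ∃ σ : ℕ ≃ ℕ, (∀ n ∉ B, σ n = n) ∧ σ '' C = T := by
  classical
  obtain ⟨e1⟩ := equiv_of_infinite hC hT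
  obtain ⟨e2⟩ := equiv_of_infinite hBC hBT
  set eB : ↥B ≃ ↥B :=
    (Equiv.Set.sumDiffSubset hCB).symm.trans
      ((e1.sumCongr e2).trans (Equiv.Set.sumDiffSubset hTB)) with heB
  set σ : ℕ ≃ ℕ :=
    (Equiv.Set.sumCompl B).symm.trans
      ((eB.sumCongr (Equiv.refl ↥(Bᶜ))).trans (Equiv.Set.sumCompl B)) with hσ
  have hfix : ∀ n ∉ B, σ n = n := by
    intro n hn
    simp only [hσ, Equiv.trans_apply]
    rw [Equiv.Set.sumCompl_symm_apply_of_notMem hn]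
    simp
  have hCval : ∀ (n : ℕ) (hn : n ∈ C), σ n = ((e1 ⟨n, hn⟩ : ↥T) : ℕ) := by
    intro n hn
    simp only [hσ, Equiv.trans_apply]
    rw [Equiv.Set.sumCompl_symm_apply_of_mem (hCB hn)]
    have heBv : eB ⟨n, hCB hn⟩ = Set.inclusion hTB (e1 ⟨n, hn⟩) := by
      simp only [heB, Equiv.trans_apply]
      rw [Equiv.Set.sumDiffSubset_symm_apply_of_mem hCB hn]
      simp
    simp [heBv]
  refine ⟨σ, hfix, ?_⟩
  apply Subset.antisymm
  · rintro m ⟨n, hn, rfl⟩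
    rw [hCval n hn]
    exact (e1 ⟨n, hn⟩).2
  · intro t ht
    refine ⟨((e1.symm ⟨t, ht⟩ : ↥C) : ℕ), (e1.symm ⟨t, ht⟩).2, ?_⟩
    rw [hCval _ (e1.symm ⟨t, ht⟩).2]
    simp

/-! ### An almost disjoint family of size continuum -/

noncomputable def pref (x : ℕ → Bool) (n : ℕ) : ℕ :=
  Encodable.encode (List.ofFn fun i : Fin n => x i)

lemma pref_inj_aux {x y : ℕ → Bool} {n m : ℕ} (h : pref x n = pref y m) :
    n = m ∧ ∀ i, i < n → x i = y i := by
  have hl : (List.ofFn fun i : Fin n => x i) = List.ofFn fun i : Fin m => y i :=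
    Encodable.encode_injective h
  have hnm : n = m := by
    have := congrArg List.length hl
    simpa using this
  subst hnm
  rw [List.ofFn_inj] at hl
  exact ⟨rfl, fun i hi => congrFun hl ⟨i, hi⟩⟩

lemma pref_injective (x : ℕ → Bool) : Function.Injective (pref x) :=
  fun n m h => (pref_inj_aux h).1

noncomputable def Abase (x : ℕ → Bool) : Set ℕ := range (pref x)

lemma Abase_infinite (x : ℕ → Bool) : (Abase x).Infinite :=
  infinite_range_of_injective (pref_injective x)

lemma Abase_ad {x y : ℕ → Bool} (h : x ≠ y) : (Abase x ∩ Abase y).Finite := by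
  have hk : ∃ k, x k ≠ y k := by
    by_contra hc
    push_neg at hc
    exact h (funext hc)
  obtain ⟨k, hk⟩ := hk
  have hsub : Abase x ∩ Abase y ⊆ pref x '' Iic k := by
    rintro z ⟨⟨n, rfl⟩, ⟨m, hm⟩⟩
    obtain ⟨hmn, hagree⟩ := pref_inj_aux hm
    refine ⟨n, ?_, rfl⟩
    subst hmn
    by_contra hnk
    simp only [mem_Iic, not_le] at hnk
    exact hk ((hagree k hnk).symm)
  exact ((finite_Iic k).image _).subset hsub

/-! ### Extracting basic compact-open neighborhoods -/

lemma exists_basic_nbhd {U : Set (OmegaStar ≃ₜ OmegaStar)} (hU : IsOpen U)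
    {h0 : OmegaStar ≃ₜ OmegaStar} (h0U : h0 ∈ U) :
    ∃ (ι : Type) (_ : Fintype ι) (K W : ι → Set OmegaStar),
      (∀ i, IsCompact (K i)) ∧ (∀ i, IsOpen (W i)) ∧ (∀ i, MapsTo ⇑h0 (K i) (W i)) ∧
      ∀ h : OmegaStar ≃ₜ OmegaStar, (∀ i, MapsTo ⇑h (K i) (W i)) → h ∈ U := by
  classical
  obtain ⟨O, hO, hUO⟩ := isOpen_induced_iff.mp hU
  have hbasis := TopologicalSpace.isTopologicalBasis_of_subbasis
    (ContinuousMap.compactOpen_eq (X := OmegaStar) (Y := OmegaStar))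
  have h0O : (h0 : C(OmegaStar, OmegaStar)) ∈ O := by
    rw [← hUO] at h0U; exact h0U
  obtain ⟨v, hvB, hv0, hvO⟩ := hbasis.exists_subset_of_mem_open h0O hO
  obtain ⟨fam, ⟨hfin, hsub⟩, rfl⟩ := hvB
  have hch : ∀ t : ↥fam, ∃ KW : Set OmegaStar × Set OmegaStar,
      IsCompact KW.1 ∧ IsOpen KW.2 ∧
      (t : Set C(OmegaStar, OmegaStar)) = {f : C(OmegaStar, OmegaStar) | MapsTo ⇑f KW.1 KW.2} := by
    intro t
    rcases hsub t.2 with ⟨K, hK, W, hW, hKW⟩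
    exact ⟨(K, W), hK, hW, hKW.symm⟩
  choose KW h1 h2 h3 using hch
  haveI : Fintype ↥fam := hfin.fintype
  refine ⟨↥fam, inferInstance, fun t => (KW t).1, fun t => (KW t).2, h1, h2, ?_, ?_⟩
  · intro t
    have ht := (mem_sInter.mp hv0) t.1 t.2
    rw [h3 t] at ht
    exact ht
  · intro h hh
    rw [← hUO]
    apply hvO
    rw [mem_sInter]
    intro t htfam
    have ht' : t = {f : C(OmegaStar, OmegaStar) |
        MapsTo ⇑f (KW ⟨t, htfam⟩).1 (KW ⟨t, htfam⟩).2} := h3 ⟨t, htfam⟩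
    rw [ht']
    exact hh ⟨t, htfam⟩

end OSP

open OSP in
/-- Every nonempty open subset `U` of `H(ω*)` contains `𝔠` many
pairwise disjoint nonempty open subsets; hence the cellularity and the density of every
nonempty open subspace of `H(ω*)` equal `𝔠`. -/
theorem cellularity_density_homeoOmegaStar
    (U : Set (OmegaStar ≃ₜ OmegaStar)) (hU : IsOpen U) (hne : U.Nonempty) :
    (∃ 𝓥 : Set (Set (OmegaStar ≃ₜ OmegaStar)),
      Cardinal.mk 𝓥 = Cardinal.continuum ∧
      (∀ V ∈ 𝓥, IsOpen V ∧ V.Nonempty ∧ V ⊆ U) ∧ 𝓥.PairwiseDisjoint id) ∧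
    (∀ 𝓥 : Set (Set (OmegaStar ≃ₜ OmegaStar)),
      (∀ V ∈ 𝓥, IsOpen V ∧ V.Nonempty ∧ V ⊆ U) → 𝓥.PairwiseDisjoint id →
      Cardinal.mk 𝓥 ≤ Cardinal.continuum) ∧
    (∀ D : Set (OmegaStar ≃ₜ OmegaStar), D ⊆ U → U ⊆ closure D →
      Cardinal.continuum ≤ Cardinal.mk D) ∧
    (∃ D : Set (OmegaStar ≃ₜ OmegaStar), D ⊆ U ∧ U ⊆ closure D ∧
      Cardinal.mk D = Cardinal.continuum) := by
  classical
  obtain ⟨h0, h0U⟩ := hne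
  obtain ⟨ι, hι, K, W, hKcomp, hWopen, h0KW, hback⟩ := exists_basic_nbhd hU h0U
  haveI : Fintype ι := hι
  obtain ⟨q, -⟩ := tr_nonempty_of_infinite (Set.infinite_univ (α := ℕ))
  -- the protecting clopen neighborhood Ω of q
  set Ω : Set OmegaStar := ⋂ i, (if q ∈ ⇑h0 '' K i then W i else (⇑h0 '' K i)ᶜ) with hΩdef
  have hKim : ∀ i, IsClosed (⇑h0 '' K i) := fun i => ((hKcomp i).image h0.continuous).isClosed
  have hΩopen : IsOpen Ω := by
    apply isOpen_iInter_of_finite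
    intro i
    by_cases hi : q ∈ ⇑h0 '' K i
    · simpa [hi] using hWopen i
    · simpa [hi] using (hKim i).isOpen_compl
  have hqΩ : q ∈ Ω := by
    apply mem_iInter.mpr
    intro i
    by_cases hi : q ∈ ⇑h0 '' K i
    · rw [if_pos hi]
      rcases hi with ⟨z, hz, hzq⟩
      rw [← hzq]
      exact h0KW i hz
    · rw [if_neg hi]
      exact hi
  obtain ⟨B, hqB, hBΩ, hBinf⟩ := exists_tr_subset hΩopen hqΩ
  -- split B into two infinite pieces
  set jB := hBinf.natEmbedding with hjBdef
  set C : Set ℕ := range (fun n => ((jB (2 * n) : ↥B) : ℕ)) with hCdef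
  set C' : Set ℕ := range (fun n => ((jB (2 * n + 1) : ↥B) : ℕ)) with hC'def
  have hCB : C ⊆ B := by rintro _ ⟨n, rfl⟩; exact (jB (2 * n)).2
  have hC'B : C' ⊆ B := by rintro _ ⟨n, rfl⟩; exact (jB (2 * n + 1)).2
  have hCC' : ∀ m, m ∈ C → m ∈ C' → False := by
    rintro m ⟨n, hn⟩ ⟨k, hk⟩
    have := jB.injective (Subtype.coe_injective (hn.trans hk.symm))
    omega
  have hCinf : C.Infinite := by
    apply infinite_range_of_injective
    intro a b hab
    have := jB.injective (Subtype.coe_injective hab)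
    omega
  have hC'inf : C'.Infinite := by
    apply infinite_range_of_injective
    intro a b hab
    have := jB.injective (Subtype.coe_injective hab)
    omega
  -- the almost disjoint family inside C'
  set jC := hC'inf.natEmbedding with hjCdef
  have hjCinj : Function.Injective (fun n => ((jC n : ↥C') : ℕ)) :=
    fun a b hab => jC.injective (Subtype.coe_injective hab)
  set AD : (ℕ → Bool) → Set ℕ := fun x => (fun n => ((jC n : ↥C') : ℕ)) '' Abase x with hADdef
  have hADC' : ∀ x, AD x ⊆ C' := by rintro x _ ⟨n, -, rfl⟩; exact (jC n).2
  have hADinf : ∀ x, (AD x).Infinite :=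
    fun x => (Abase_infinite x).image (hjCinj.injOn)
  have hADfin : ∀ x y, x ≠ y → (AD x ∩ AD y).Finite := by
    intro x y hxy
    have hsub : AD x ∩ AD y ⊆ (fun n => ((jC n : ↥C') : ℕ)) '' (Abase x ∩ Abase y) := by
      rintro z ⟨⟨a, ha, rfl⟩, ⟨b, hb, hba⟩⟩
      exact ⟨a, ⟨ha, (hjCinj hba).symm ▸ hb⟩, rfl⟩
    exact (((Abase_ad hxy).image _)).subset hsub
  -- permutations
  have hperm : ∀ x : ℕ → Bool, ∃ σ : ℕ ≃ ℕ, (∀ n ∉ B, σ n = n) ∧ ⇑σ '' C = AD x := by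
    intro x
    apply exists_perm hCB ((hADC' x).trans hC'B) hCinf (hADinf x)
    · exact hC'inf.mono (fun m hm => ⟨hC'B hm, fun hc => hCC' m hc hm⟩)
    · exact hCinf.mono (fun m hm => ⟨hCB hm, fun hc => hCC' m (hm) (hADC' x hc)⟩)
  choose σ hσfix hσimg using hperm
  have hσB : ∀ x, ⇑(σ x) '' B ⊆ B := by
    rintro x _ ⟨n, hn, rfl⟩
    by_contra hmem
    have h1 : σ x (σ x n) = σ x n := hσfix x _ hmem
    have h2 : σ x n = n := (σ x).injective h1
    rw [h2] at hmem
    exact hmem hn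
  -- the homeomorphisms
  set hhom : (ℕ → Bool) → (OmegaStar ≃ₜ OmegaStar) := fun x => h0.trans (permOmega (σ x))
    with hhomdef
  set K0 : Set OmegaStar := ⇑h0.symm '' tr C with hK0def
  have hK0comp : IsCompact K0 := (isCompact_tr C).image h0.symm.continuous
  have hK0ne : K0.Nonempty := (tr_nonempty_of_infinite hCinf).image _
  set MT : (ℕ → Bool) → Set (OmegaStar ≃ₜ OmegaStar) :=
    fun x => {h : OmegaStar ≃ₜ OmegaStar | MapsTo ⇑h K0 (tr (AD x))} with hMTdef
  have hMTopen : ∀ x, IsOpen (MT x) := by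
    intro x
    exact isOpen_induced_iff.mpr
      ⟨{f : C(OmegaStar, OmegaStar) | MapsTo ⇑f K0 (tr (AD x))},
       ContinuousMap.isOpen_setOf_mapsTo hK0comp (isClopen_tr _).isOpen, rfl⟩
  set V : (ℕ → Bool) → Set (OmegaStar ≃ₜ OmegaStar) := fun x => U ∩ MT x with hVdef
  have hVopen : ∀ x, IsOpen (V x) := fun x => hU.inter (hMTopen x)
  have hhomV : ∀ x, hhom x ∈ V x := by
    intro x
    constructor
    · apply hback
      intro i y hy
      have happ : hhom x y = permOmega (σ x) (h0 y) := rfl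
      rw [happ]
      by_cases hb : h0 y ∈ tr B
      · have h1 : permOmega (σ x) (h0 y) ∈ tr B :=
          tr_mono (hσB x) (permOmega_mapsTo hb)
        have hq' : q ∈ ⇑h0 '' K i := by
          by_contra hq'
          have h2 := mem_iInter.mp (hBΩ hb) i
          rw [if_neg hq'] at h2
          exact h2 ⟨y, hy, rfl⟩
        have h3 := mem_iInter.mp (hBΩ h1) i
        rwa [if_pos hq'] at h3
      · rw [permOmega_fix (hσfix x) hb]
        exact h0KW i hy
    · rintro z ⟨w, hw, rfl⟩
      have happ : hhom x (h0.symm w) = permOmega (σ x) (h0 (h0.symm w)) := rfl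
      rw [happ, h0.apply_symm_apply]
      have := permOmega_mapsTo (σ := σ x) (C := C) hw
      rwa [hσimg x] at this
  have hdisj : ∀ x y, x ≠ y → V x ∩ V y = ∅ := by
    intro x y hxy
    ext h
    simp only [mem_inter_iff, mem_empty_iff_false, iff_false, not_and]
    rintro ⟨-, hmx⟩ ⟨-, hmy⟩
    obtain ⟨p, hp⟩ := hK0ne
    have h1 : h p ∈ tr (AD x ∩ AD y) := by
      rw [tr_inter]
      exact ⟨hmx hp, hmy hp⟩
    rw [tr_eq_empty_of_finite (hADfin x y hxy)] at h1
    exact h1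
  have hVinj : Function.Injective V := by
    intro x y hVxy
    by_contra hxy
    have h1 := hdisj x y hxy
    rw [hVxy, inter_self] at h1
    have := hhomV y
    rw [h1] at this
    exact this
  have hcont : Cardinal.mk (ℕ → Bool) = Cardinal.continuum := by
    rw [← Cardinal.power_def, Cardinal.mk_bool, Cardinal.mk_nat, Cardinal.two_power_aleph0]
  -- the dense family machinery
  set NN : List (Set ℕ × Set ℕ) → Set (OmegaStar ≃ₜ OmegaStar) :=
    fun l => {h : OmegaStar ≃ₜ OmegaStar | ∀ p ∈ l, MapsTo ⇑h (tr p.1) (tr p.2)} with hNNdef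
  have hφex : ∀ l : List (Set ℕ × Set ℕ), ∃ h : OmegaStar ≃ₜ OmegaStar,
      (NN l).Nonempty → h ∈ NN l := by
    intro l
    by_cases hl : (NN l).Nonempty
    · exact ⟨hl.some, fun _ => hl.some_mem⟩
    · exact ⟨Homeomorph.refl _, fun h => absurd h hl⟩
  choose φ hφ using hφex
  have hdense : ∀ O : Set (OmegaStar ≃ₜ OmegaStar), IsOpen O → O.Nonempty →
      ∃ l : List (Set ℕ × Set ℕ), (NN l).Nonempty ∧ NN l ⊆ O := by
    rintro O hO ⟨h1, h1O⟩
    obtain ⟨κ, hκ, K', W', hK'c, hW'o, h1KW, hback'⟩ := exists_basic_nbhd hO h1O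
    haveI : Fintype κ := hκ
    have step : ∀ i : κ, ∃ AB : Set ℕ × Set ℕ, K' i ⊆ tr AB.1 ∧
        MapsTo ⇑h1 (tr AB.1) (tr AB.2) ∧ tr AB.2 ⊆ W' i := by
      intro i
      have hsub1 : K' i ⊆ ⇑h1 ⁻¹' W' i := fun z hz => h1KW i hz
      obtain ⟨A, hKA, hAW⟩ := exists_tr_of_compact_subset (hK'c i)
        ((hW'o i).preimage h1.continuous) hsub1
      have hsub2 : ⇑h1 '' tr A ⊆ W' i := by rintro _ ⟨z, hz, rfl⟩; exact hAW hz
      obtain ⟨Bi, hBA, hBW⟩ := exists_tr_of_compact_subset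
        ((isCompact_tr A).image h1.continuous) (hW'o i) hsub2
      exact ⟨(A, Bi), hKA, fun z hz => hBA ⟨z, hz, rfl⟩, hBW⟩
    choose AB hABK hABm hABW using step
    refine ⟨(Finset.univ : Finset κ).toList.map AB, ⟨h1, ?_⟩, ?_⟩
    · intro p hp
      rcases List.mem_map.mp hp with ⟨i, -, rfl⟩
      exact hABm i
    · intro h hh
      apply hback'
      intro i z hz
      have hpi : (AB i) ∈ (Finset.univ : Finset κ).toList.map AB :=
        List.mem_map.mpr ⟨i, by simp, rfl⟩
      exact hABW i (hh (AB i) hpi (hABK i hz))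
  have hLcard : Cardinal.mk (List (Set ℕ × Set ℕ)) = Cardinal.continuum := by
    rw [Cardinal.mk_list_eq_mk, Cardinal.mk_prod, Cardinal.mk_set_nat]
    simp only [Cardinal.lift_id]
    exact Cardinal.mul_eq_self Cardinal.aleph0_le_continuum
  set D1 : Set (OmegaStar ≃ₜ OmegaStar) := range φ ∩ U with hD1def
  have hUD1 : U ⊆ closure D1 := by
    intro u hu
    rw [mem_closure_iff]
    intro O hO huO
    obtain ⟨l, hlne, hlsub⟩ := hdense (O ∩ U) (hO.inter hU) ⟨u, huO, hu⟩
    exact ⟨φ l, (hlsub (hφ l hlne)).1, ⟨l, rfl⟩, (hlsub (hφ l hlne)).2⟩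
  have claim3 : ∀ D : Set (OmegaStar ≃ₜ OmegaStar), D ⊆ U → U ⊆ closure D →
      Cardinal.continuum ≤ Cardinal.mk D := by
    intro D hDU hUD
    have hsel : ∀ x : ℕ → Bool, ∃ d : ↥D, (d : OmegaStar ≃ₜ OmegaStar) ∈ V x := by
      intro x
      have h1 : hhom x ∈ closure D := hUD (hhomV x).1
      rw [mem_closure_iff] at h1
      obtain ⟨d, hdV, hdD⟩ := h1 (V x) (hVopen x) (hhomV x)
      exact ⟨⟨d, hdD⟩, hdV⟩
    choose dfun hd using hsel
    have hdinj : Function.Injective dfun := by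
      intro x y hxy
      by_contra hne'
      have h1 := hdisj x y hne'
      have hmem : (dfun x : OmegaStar ≃ₜ OmegaStar) ∈ V x ∩ V y := by
        refine ⟨hd x, ?_⟩
        rw [hxy]
        exact hd y
      rw [h1] at hmem
      exact hmem
    calc Cardinal.continuum = Cardinal.mk (ℕ → Bool) := hcont.symm
      _ ≤ Cardinal.mk D := Cardinal.mk_le_of_injective hdinj
  refine ⟨⟨range V, ?_, ?_, ?_⟩, ?_, claim3, ?_⟩
  · rw [Cardinal.mk_range_eq V hVinj]
    exact hcont
  · rintro V' ⟨x, rfl⟩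
    exact ⟨hVopen x, ⟨hhom x, hhomV x⟩, inter_subset_left⟩
  · rintro a ⟨x, rfl⟩ b ⟨y, rfl⟩ hab
    have hxy : x ≠ y := fun h => hab (by rw [h])
    exact Set.disjoint_iff_inter_eq_empty.mpr (hdisj x y hxy)
  · intro 𝓥' hprops hpd
    have hsel : ∀ Vm : ↥𝓥', ∃ l : List (Set ℕ × Set ℕ),
        (NN l).Nonempty ∧ NN l ⊆ (Vm : Set (OmegaStar ≃ₜ OmegaStar)) := by
      intro Vm
      obtain ⟨ho, hne', -⟩ := hprops Vm.1 Vm.2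
      exact hdense Vm.1 ho hne'
    choose lf hlne hlsub using hsel
    have hinj : Function.Injective lf := by
      intro V1 V2 h12
      have hm1 : φ (lf V1) ∈ (V1 : Set (OmegaStar ≃ₜ OmegaStar)) := hlsub V1 (hφ _ (hlne V1))
      have hm2 : φ (lf V1) ∈ (V2 : Set (OmegaStar ≃ₜ OmegaStar)) := by
        rw [h12]
        exact hlsub V2 (hφ _ (hlne V2))
      by_contra hne'
      have hne'' : (V1 : Set (OmegaStar ≃ₜ OmegaStar)) ≠ V2 :=
        fun h => hne' (Subtype.ext h)
      exact Set.disjoint_left.mp (hpd V1.2 V2.2 hne'') hm1 hm2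
    calc Cardinal.mk 𝓥' ≤ Cardinal.mk (List (Set ℕ × Set ℕ)) :=
        Cardinal.mk_le_of_injective hinj
      _ = Cardinal.continuum := hLcard
  · refine ⟨D1, inter_subset_right, hUD1, le_antisymm ?_ (claim3 D1 inter_subset_right hUD1)⟩
    calc Cardinal.mk D1 ≤ Cardinal.mk (range φ) :=
        Cardinal.mk_le_mk_of_subset inter_subset_left
      _ ≤ Cardinal.mk (List (Set ℕ × Set ℕ)) := Cardinal.mk_range_le
      _ = Cardinal.continuum := hLcard
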